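/- For every π ∈ S_n, the minimum over the coset min_{0 ≤ i < n} inv(π·c_n^i) is at most the average (1/n)·Σ_{i=1}^n inv(π·c_n^i), which equals (cwinv(π) + C(n+1,3))/n. -/

import Mathlib

open Finset
open Fin.CommRing

def inversions {n : ℕ} (π : Equiv.Perm (Fin n)) : ℕ :=
  (Finset.univ.filter (fun p : Fin n × Fin n => p.1 < p.2 ∧ π p.2 < π p.1)).card

def winv {n : ℕ} (π : Equiv.Perm (Fin n)) : ℤ :=
  ∑ p ∈ Finset.univ.filter (fun p : Fin n × Fin n => p.1 < p.2 ∧ π p.2 < π p.1),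
    ((π p.1 : ℤ) - (π p.2 : ℤ))

def cwinv {n : ℕ} (π : Equiv.Perm (Fin n)) : ℤ :=
  n * inversions π - 2 * winv π



lemma rotPow {m : ℕ} (i : ℕ) (q : Fin (m+1)) :
    ((finRotate (m+1)) ^ i) q = q + (i : Fin (m+1)) := by
  induction i generalizing q with
  | zero => simp
  | succ k ih =>
    rw [pow_succ, Equiv.Perm.mul_apply, finRotate_succ_apply, ih]
    push_cast
    ring

lemma sum_Icc_cast {m : ℕ} {M : Type*} [AddCommMonoid M] (F : Fin (m+1) → M) :
    ∑ i ∈ Finset.Icc 1 (m+1), F (i : Fin (m+1)) = ∑ x : Fin (m+1), F x := by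
  refine Finset.sum_nbij' (fun i => (i : Fin (m+1)))
    (fun x => if x = 0 then m+1 else x.val) (fun a _ => mem_univ _) ?_ ?_ ?_ (fun a _ => rfl)
  · intro x _
    by_cases h : x = 0 <;> simp only [h, ite_true, ite_false, Finset.mem_Icc]
    · omega
    · have h1 := x.isLt
      have h2 : x.val ≠ 0 := fun hh => h (Fin.ext hh)
      omega
  · intro a ha
    simp only [Finset.mem_Icc] at ha
    by_cases h : (a : Fin (m+1)) = 0
    · simp only [if_pos h]
      have hd : (m+1) ∣ a := by rwa [Fin.natCast_eq_zero] at h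
      have := Nat.le_of_dvd (by omega) hd
      omega
    · simp only [if_neg h, Fin.val_natCast]
      have hd : ¬ ((m+1) ∣ a) := by rwa [Fin.natCast_eq_zero] at h
      have : a ≠ m+1 := fun hh => hd (hh ▸ dvd_refl _)
      have : a < m+1 := by omega
      exact Nat.mod_eq_of_lt this
  · intro x _
    by_cases h : x = 0
    · simp [h]
    · simp [h]


lemma gauss_int (n : ℕ) : (∑ a ∈ Finset.range n, (a : ℤ)) * 2 = n * (n-1) := by
  induction n with
  | zero => simp
  | succ k ih => rw [Finset.sum_range_succ, add_mul, ih]; push_cast; ring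

lemma innerSumC (n : ℕ) : ∑ a ∈ Finset.range n, ((n:ℤ) - a) = (n+1).choose 2 := by
  have h2 : ((n+1).choose 2 : ℤ) * 2 = (n+1) * n := by
    have h3 : (n+1).choose 2 * 2 = (n+1) * n := by
      rw [Nat.choose_two_right]
      have : 2 ∣ (n+1) * ((n+1)-1) := by
        rcases Nat.even_or_odd n with h | h
        · exact Dvd.dvd.mul_left (even_iff_two_dvd.mp (by simpa using h)) _
        · exact Dvd.dvd.mul_right (even_iff_two_dvd.mp (Odd.add_one h)) _
      rw [Nat.div_mul_cancel this]
      simp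
    exact_mod_cast h3
  have hL : (∑ a ∈ Finset.range n, ((n:ℤ) - a)) * 2 = (n+1) * n := by
    rw [Finset.sum_sub_distrib, Finset.sum_const, Finset.card_range, sub_mul, gauss_int]
    push_cast
    ring
  omega

lemma Usum (n : ℕ) :
    ∑ b ∈ Finset.range n, ∑ a ∈ Finset.range b, ((b:ℤ) - a) = ((n+1).choose 3 : ℤ) := by
  induction n with
  | zero => simp [Nat.choose]
  | succ k ih =>
    rw [Finset.sum_range_succ, ih, innerSumC]
    have h : (k+2).choose 3 = (k+1).choose 2 + (k+1).choose 3 := Nat.choose_succ_succ (k+1) 2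
    have : k + 1 + 1 = k + 2 := rfl
    rw [this, h]
    push_cast
    ring


lemma card_lt_filter {m k : ℕ} (hk : k ≤ m+1) :
    (Finset.univ.filter (fun x : Fin (m+1) => x.val < k)).card = k := by
  rw [Finset.card_filter]
  rw [Fin.sum_univ_eq_sum_range (fun i => if i < k then 1 else 0) (m+1)]
  rw [← Finset.card_filter]
  have : (Finset.range (m+1)).filter (fun i => i < k) = Finset.range k := by
    ext x; simp only [Finset.mem_filter, Finset.mem_range]; omega
  rw [this, Finset.card_range]

lemma card_gt_filter {m : ℕ} (k : ℕ) :
    (Finset.univ.filter (fun x : Fin (m+1) => k < x.val)).card = m - k := by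
  rw [Finset.card_filter]
  rw [Fin.sum_univ_eq_sum_range (fun i => if k < i then 1 else 0) (m+1)]
  rw [← Finset.card_filter]
  have : (Finset.range (m+1)).filter (fun i => k < i) = Finset.Ico (k+1) (m+1) := by
    ext x; simp only [Finset.mem_filter, Finset.mem_range, Finset.mem_Ico]; omega
  rw [this, Nat.card_Ico]
  omega

lemma pair_to_double {n : ℕ} (pred : Fin n × Fin n → Prop) [DecidablePred pred]
    (f : Fin n × Fin n → ℤ) :
    ∑ p ∈ Finset.univ.filter pred, f p
      = ∑ x : Fin n, ∑ y : Fin n, (if pred (x,y) then f (x,y) else 0) := by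
  rw [Finset.sum_filter, Fintype.sum_prod_type]

lemma Cval {m : ℕ} :
    ∑ p ∈ Finset.univ.filter (fun p : Fin (m+1) × Fin (m+1) => p.1 < p.2),
      ((p.2 : ℤ) - (p.1 : ℤ)) = (((m+2).choose 3 : ℕ) : ℤ) := by
  rw [pair_to_double]
  rw [Finset.sum_comm]
  have hinner : ∀ y : Fin (m+1),
      (∑ x : Fin (m+1), if (x : Fin (m+1)) < y then ((y:ℤ) - (x:ℤ)) else 0)
        = ∑ a ∈ Finset.range y.val, ((y.val:ℤ) - a) := by
    intro y
    simp only [Fin.lt_def]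
    rw [Fin.sum_univ_eq_sum_range (fun a => if a < y.val then ((y.val:ℤ) - a) else 0) (m+1)]
    rw [← Finset.sum_filter]
    have : (Finset.range (m+1)).filter (fun a => a < y.val) = Finset.range y.val := by
      ext x; simp only [Finset.mem_filter, Finset.mem_range]
      have := y.isLt; omega
    rw [this]
  simp only [hinner]
  rw [Fin.sum_univ_eq_sum_range (fun b => ∑ a ∈ Finset.range b, ((b:ℤ) - a)) (m+1)]
  exact Usum (m+1)

lemma sym2 {n : ℕ} (f : Fin n × Fin n → ℤ) (hsym : ∀ x y, f (x,y) = f (y,x))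
    (hdiag : ∀ x, f (x,x) = 0) :
    ∑ p : Fin n × Fin n, f p
      = 2 * ∑ p ∈ Finset.univ.filter (fun p : Fin n × Fin n => p.1 < p.2), f p := by
  have h1 := Finset.sum_filter_add_sum_filter_not Finset.univ
    (fun p : Fin n × Fin n => p.1 < p.2) f
  have h2 := Finset.sum_filter_add_sum_filter_not
    (Finset.univ.filter (fun p : Fin n × Fin n => ¬ p.1 < p.2))
    (fun p : Fin n × Fin n => p.2 < p.1) f
  rw [Finset.filter_filter, Finset.filter_filter] at h2
  have hdiag0 : ∑ p ∈ Finset.univ.filter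
      (fun p : Fin n × Fin n => ¬ p.1 < p.2 ∧ ¬ p.2 < p.1), f p = 0 := by
    apply Finset.sum_eq_zero
    intro p hp
    simp only [Finset.mem_filter] at hp
    have : p.1 = p.2 := le_antisymm (not_lt.mp hp.2.2) (not_lt.mp hp.2.1)
    have hp2 : p = (p.1, p.1) := by rw [Prod.ext_iff]; exact ⟨rfl, this.symm⟩
    rw [hp2, hdiag]
  have hgt : ∑ p ∈ Finset.univ.filter
      (fun p : Fin n × Fin n => ¬ p.1 < p.2 ∧ p.2 < p.1), f p
      = ∑ p ∈ Finset.univ.filter (fun p : Fin n × Fin n => p.1 < p.2), f p := by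
    apply Finset.sum_nbij' (fun p => (p.2, p.1)) (fun p => (p.2, p.1))
    · intro p hp
      simp only [Finset.mem_filter, Finset.mem_univ, true_and] at hp ⊢
      exact hp.2
    · intro p hp
      simp only [Finset.mem_filter, Finset.mem_univ, true_and] at hp ⊢
      exact ⟨asymm hp, hp⟩
    · intro p _; rfl
    · intro p _; rfl
    · intro p _; exact hsym p.1 p.2
  omega

lemma count_rot {m : ℕ} (a b : Fin (m+1)) (hab : a ≠ b) :
    ∑ t : Fin (m+1), (if a - t < b - t then (1:ℤ) else 0)
      = (m+1 : ℤ) - ((b - a).val : ℤ) := by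
  set d : Fin (m+1) := b - a with hd
  have hbt : ∀ t : Fin (m+1), b - t = (a - t) + d := by intro t; rw [hd]; ring
  have h1 : ∀ t : Fin (m+1), (if a - t < b - t then (1:ℤ) else 0)
      = (fun x : Fin (m+1) => if x < x + d then (1:ℤ) else 0) (a - t) := by
    intro t; simp only [hbt t]
  simp only [h1]
  have hcomp := Equiv.sum_comp (Equiv.subLeft a) (fun x : Fin (m+1) => if x < x + d then (1:ℤ) else 0)
  simp only [Equiv.subLeft_apply] at hcomp
  rw [hcomp]
  have hd0 : d ≠ 0 := sub_ne_zero.mpr (Ne.symm hab)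
  have hdv : 0 < d.val := by
    rcases Nat.eq_zero_or_pos d.val with h | h
    · exact absurd (Fin.ext h) hd0
    · exact h
  have key : ∀ x : Fin (m+1), (x < x + d) ↔ (x.val < (m+1) - d.val) := by
    intro x
    rw [Fin.lt_def, Fin.add_def]
    simp only
    have hx := x.isLt
    have hdlt := d.isLt
    rcases lt_or_ge (x.val + d.val) (m+1) with h | h
    · rw [Nat.mod_eq_of_lt h]; omega
    · have : (x.val + d.val) % (m+1) = x.val + d.val - (m+1) := by
        rw [Nat.mod_eq_sub_mod h, Nat.mod_eq_of_lt (by omega)]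
      rw [this]; omega
  have : ∑ x : Fin (m+1), (if x < x + d then (1:ℤ) else 0)
      = ((Finset.univ.filter (fun x : Fin (m+1) => x.val < (m+1) - d.val)).card : ℤ) := by
    rw [Finset.card_filter, Nat.cast_sum]
    apply Finset.sum_congr rfl
    intro x _
    by_cases h : x.val < m+1 - d.val
    · rw [if_pos ((key x).mpr h), if_pos h]; simp
    · rw [if_neg (fun hh => h ((key x).mp hh)), if_neg h]; simp
  rw [this, card_lt_filter (by omega)]
  have := d.isLt
  push_cast
  omega

lemma inv_rot {m : ℕ} (π : Equiv.Perm (Fin (m+1))) (i : ℕ) :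
    inversions (π * (finRotate (m+1)) ^ i)
      = (Finset.univ.filter (fun p : Fin (m+1) × Fin (m+1) =>
          π p.2 < π p.1 ∧ p.1 - (i : Fin (m+1)) < p.2 - (i : Fin (m+1)))).card := by
  set t : Fin (m+1) := (i : Fin (m+1)) with ht
  unfold inversions
  apply Finset.card_nbij' (fun p => (p.1 + t, p.2 + t)) (fun p => (p.1 - t, p.2 - t))
  · intro p hp
    simp only [Finset.mem_coe, Finset.mem_filter, Finset.mem_univ, true_and,
      Equiv.Perm.mul_apply, rotPow] at hp ⊢
    refine ⟨hp.2, ?_⟩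
    simp only [add_sub_cancel_right]
    exact hp.1
  · intro p hp
    simp only [Finset.mem_coe, Finset.mem_filter, Finset.mem_univ, true_and,
      Equiv.Perm.mul_apply, rotPow] at hp ⊢
    refine ⟨hp.2, ?_⟩
    simp only [ht, sub_add_cancel]
    exact hp.1
  · intro p _; simp
  · intro p _; simp
noncomputable def Dv {m : ℕ} (σ : Equiv.Perm (Fin (m+1))) : ℤ :=
  ∑ p ∈ Finset.univ.filter (fun p : Fin (m+1) × Fin (m+1) => p.1 < p.2),
    ((σ p.2 : ℤ) - (σ p.1 : ℤ))

lemma D_rep {m : ℕ} (σ : Equiv.Perm (Fin (m+1))) :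
    Dv σ = 2 * (∑ j : Fin (m+1), (j : ℤ) * (σ j : ℤ))
      - m * (∑ j : Fin (m+1), (σ j : ℤ)) := by
  unfold Dv
  rw [pair_to_double]
  have hsplit : ∀ x y : Fin (m+1),
      (if x < y then ((σ y : ℤ) - (σ x : ℤ)) else 0)
      = (if x < y then (σ y : ℤ) else 0) - (if x < y then (σ x : ℤ) else 0) := by
    intro x y; split <;> simp
  simp only [hsplit]
  simp only [Finset.sum_sub_distrib]
  have hT1 : ∀ y : Fin (m+1), (∑ x : Fin (m+1), if x < y then (σ y : ℤ) else 0)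
      = (y.val : ℤ) * (σ y : ℤ) := by
    intro y
    rw [← Finset.sum_filter, Finset.sum_const, nsmul_eq_mul]
    congr 1
    have : (Finset.univ.filter (fun x : Fin (m+1) => x < y))
        = Finset.univ.filter (fun x : Fin (m+1) => x.val < y.val) := by
      apply Finset.filter_congr; intro x _; exact Fin.lt_def
    rw [this, card_lt_filter (le_of_lt y.isLt)]
  have hT2 : ∀ x : Fin (m+1), (∑ y : Fin (m+1), if x < y then (σ x : ℤ) else 0)
      = ((m : ℤ) - (x.val : ℤ)) * (σ x : ℤ) := by
    intro x
    rw [← Finset.sum_filter, Finset.sum_const, nsmul_eq_mul]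
    congr 1
    have : (Finset.univ.filter (fun y : Fin (m+1) => x < y))
        = Finset.univ.filter (fun y : Fin (m+1) => x.val < y.val) := by
      apply Finset.filter_congr; intro y _; exact Fin.lt_def
    rw [this, card_gt_filter x.val]
    have := x.isLt
    push_cast [Nat.cast_sub (by omega : x.val ≤ m)]
    ring
  rw [Finset.sum_comm]
  simp only [hT1, hT2]
  have : ∑ x : Fin (m+1), ((m : ℤ) - (x.val : ℤ)) * (σ x : ℤ)
      = m * (∑ j : Fin (m+1), (σ j : ℤ)) - ∑ j : Fin (m+1), (j : ℤ) * (σ j : ℤ) := by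
    rw [Finset.mul_sum, ← Finset.sum_sub_distrib]
    apply Finset.sum_congr rfl
    intro x _; ring
  rw [this]
  ring

lemma D_symm {m : ℕ} (σ : Equiv.Perm (Fin (m+1))) : Dv σ = Dv σ⁻¹ := by
  rw [D_rep, D_rep]
  have h1 : (∑ j : Fin (m+1), (j : ℤ) * (σ j : ℤ))
      = ∑ j : Fin (m+1), (j : ℤ) * (σ⁻¹ j : ℤ) := by
    have := Equiv.sum_comp σ (fun a : Fin (m+1) => ((σ⁻¹ a : ℤ) * (a : ℤ)))
    simp only [Equiv.Perm.coe_inv, Equiv.symm_apply_apply] at this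
    have hmc : (∑ j : Fin (m+1), (j : ℤ) * (σ⁻¹ j : ℤ))
        = ∑ j : Fin (m+1), ((σ⁻¹ j : ℤ)) * (j : ℤ) := by
      apply Finset.sum_congr rfl; intro j _; ring
    rw [hmc]
    exact this
  have h2 : (∑ j : Fin (m+1), (σ j : ℤ)) = ∑ j : Fin (m+1), (σ⁻¹ j : ℤ) := by
    rw [Equiv.sum_comp σ (fun a : Fin (m+1) => (a : ℤ)),
      Equiv.sum_comp σ⁻¹ (fun a : Fin (m+1) => (a : ℤ))]
  rw [h1, h2]

lemma Eval {m : ℕ} (σ : Equiv.Perm (Fin (m+1))) :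
    ∑ p ∈ Finset.univ.filter (fun p : Fin (m+1) × Fin (m+1) => p.1 < p.2),
      |(σ p.1 : ℤ) - (σ p.2 : ℤ)| = (((m+2).choose 3 : ℕ) : ℤ) := by
  have hg := sym2 (fun p : Fin (m+1) × Fin (m+1) => |(σ p.1 : ℤ) - (σ p.2 : ℤ)|)
    (fun x y => abs_sub_comm _ _) (fun x => by simp)
  have hf := sym2 (fun p : Fin (m+1) × Fin (m+1) => |(p.1 : ℤ) - (p.2 : ℤ)|)
    (fun x y => abs_sub_comm _ _) (fun x => by simp)
  have hre := Equiv.sum_comp (Equiv.prodCongr σ σ)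
    (fun p : Fin (m+1) × Fin (m+1) => |(p.1 : ℤ) - (p.2 : ℤ)|)
  simp only [Equiv.prodCongr_apply, Prod.map] at hre
  have hCf : ∑ p ∈ Finset.univ.filter (fun p : Fin (m+1) × Fin (m+1) => p.1 < p.2),
      |(p.1 : ℤ) - (p.2 : ℤ)| = (((m+2).choose 3 : ℕ) : ℤ) := by
    rw [← Cval]
    apply Finset.sum_congr rfl
    intro p hp
    simp only [Finset.mem_filter] at hp
    have : (p.1 : ℤ) ≤ (p.2 : ℤ) := by exact_mod_cast le_of_lt hp.2
    rw [abs_sub_comm, abs_of_nonneg (sub_nonneg.mpr this)]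
  linarith [hg, hf, hre, hCf]

lemma winv_rel {m : ℕ} (σ : Equiv.Perm (Fin (m+1))) :
    Dv σ = (((m+2).choose 3 : ℕ) : ℤ) - 2 * winv σ := by
  classical
  have hE := Eval σ
  have hsplitE := Finset.sum_filter_add_sum_filter_not
    (Finset.univ.filter (fun p : Fin (m+1) × Fin (m+1) => p.1 < p.2))
    (fun p => σ p.2 < σ p.1)
    (fun p : Fin (m+1) × Fin (m+1) => |(σ p.1 : ℤ) - (σ p.2 : ℤ)|)
  have hsplitD := Finset.sum_filter_add_sum_filter_not
    (Finset.univ.filter (fun p : Fin (m+1) × Fin (m+1) => p.1 < p.2))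
    (fun p => σ p.2 < σ p.1)
    (fun p : Fin (m+1) × Fin (m+1) => ((σ p.2 : ℤ) - (σ p.1 : ℤ)))
  rw [Finset.filter_filter, Finset.filter_filter] at hsplitE hsplitD
  have hA : ∑ p ∈ Finset.univ.filter
      (fun p : Fin (m+1) × Fin (m+1) => p.1 < p.2 ∧ σ p.2 < σ p.1),
      |(σ p.1 : ℤ) - (σ p.2 : ℤ)| = winv σ := by
    apply Finset.sum_congr rfl
    intro p hp
    simp only [Finset.mem_filter] at hp
    have : (σ p.2 : ℤ) ≤ (σ p.1 : ℤ) := by exact_mod_cast le_of_lt hp.2.2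
    rw [abs_of_nonneg (sub_nonneg.mpr this)]
  have hAD : ∑ p ∈ Finset.univ.filter
      (fun p : Fin (m+1) × Fin (m+1) => p.1 < p.2 ∧ σ p.2 < σ p.1),
      ((σ p.2 : ℤ) - (σ p.1 : ℤ)) = - winv σ := by
    unfold winv
    rw [← Finset.sum_neg_distrib]
    apply Finset.sum_congr rfl
    intro p _; ring
  have hB : ∑ p ∈ Finset.univ.filter
      (fun p : Fin (m+1) × Fin (m+1) => p.1 < p.2 ∧ ¬ σ p.2 < σ p.1),
      |(σ p.1 : ℤ) - (σ p.2 : ℤ)|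
      = ∑ p ∈ Finset.univ.filter
      (fun p : Fin (m+1) × Fin (m+1) => p.1 < p.2 ∧ ¬ σ p.2 < σ p.1),
      ((σ p.2 : ℤ) - (σ p.1 : ℤ)) := by
    apply Finset.sum_congr rfl
    intro p hp
    simp only [Finset.mem_filter] at hp
    have : (σ p.1 : ℤ) ≤ (σ p.2 : ℤ) := by exact_mod_cast le_of_not_gt hp.2.2
    rw [abs_sub_comm, abs_of_nonneg (sub_nonneg.mpr this)]
  unfold Dv
  rw [← hsplitD, hAD]
  rw [← hsplitE, hA, hB] at hE
  omega

lemma winv_invariant {m : ℕ} (σ : Equiv.Perm (Fin (m+1))) : winv σ⁻¹ = winv σ := by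
  have h1 := winv_rel σ
  have h2 := winv_rel σ⁻¹
  have h3 := D_symm σ
  omega

lemma pinv_eq {m : ℕ} (π : Equiv.Perm (Fin (m+1))) :
    ∑ p ∈ Finset.univ.filter
      (fun p : Fin (m+1) × Fin (m+1) => p.1 < p.2 ∧ π p.2 < π p.1),
      ((p.2 : ℤ) - (p.1 : ℤ)) = winv π := by
  rw [← winv_invariant π]
  unfold winv
  apply Finset.sum_nbij' (fun p => (π p.2, π p.1)) (fun p => (π⁻¹ p.2, π⁻¹ p.1))
  · intro p hp
    simp only [Finset.mem_filter, Finset.mem_univ, true_and,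
      Equiv.Perm.coe_inv, Equiv.symm_apply_apply] at hp ⊢
    exact ⟨hp.2, hp.1⟩
  · intro p hp
    simp only [Finset.mem_filter, Finset.mem_univ, true_and,
      Equiv.Perm.coe_inv, Equiv.apply_symm_apply] at hp ⊢
    exact ⟨hp.2, hp.1⟩
  · intro p _; simp
  · intro p _; simp
  · intro p hp
    simp only [Equiv.Perm.coe_inv, Equiv.symm_apply_apply]

lemma sub_val_of_lt {m : ℕ} {a b : Fin (m+1)} (h : a < b) :
    (((b - a).val : ℕ) : ℤ) = (b : ℤ) - (a : ℤ) := by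
  have ha := a.isLt
  have hb := b.isLt
  have h' : a.val < b.val := h
  rw [Fin.sub_def]
  simp only
  have : (m + 1 - a.val + b.val) % (m+1) = b.val - a.val := by
    rw [Nat.mod_eq_sub_mod (by omega), Nat.mod_eq_of_lt (by omega)]
    omega
  rw [this]
  push_cast
  omega

lemma sub_val_of_gt {m : ℕ} {a b : Fin (m+1)} (h : b < a) :
    (((b - a).val : ℕ) : ℤ) = (m+1 : ℤ) - ((a : ℤ) - (b : ℤ)) := by
  have ha := a.isLt
  have hb := b.isLt
  have h' : b.val < a.val := h
  rw [Fin.sub_def]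
  simp only
  rw [Nat.mod_eq_of_lt (by omega)]
  push_cast
  omega

theorem min_le_avg_inv {n : ℕ} (hn : 0 < n) (π : Equiv.Perm (Fin n)) :
    (∃ i < n, (n : ℤ) * inversions (π * (finRotate n) ^ i)
        ≤ ∑ i ∈ Finset.Icc 1 n, (inversions (π * (finRotate n) ^ i) : ℤ)) ∧
    ∑ i ∈ Finset.Icc 1 n, (inversions (π * (finRotate n) ^ i) : ℤ)
      = cwinv π + (n + 1).choose 3 := by
  obtain ⟨m, rfl⟩ : ∃ m, n = m + 1 := ⟨n - 1, (Nat.succ_pred_eq_of_pos hn).symm⟩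
  -- Part 2: the sum identity
  have hsum : ∑ i ∈ Finset.Icc 1 (m+1), (inversions (π * (finRotate (m+1)) ^ i) : ℤ)
      = cwinv π + (((m+2).choose 3 : ℕ) : ℤ) := by
    have h2 : ∑ i ∈ Finset.Icc 1 (m+1), (inversions (π * (finRotate (m+1)) ^ i) : ℤ)
        = ∑ t : Fin (m+1), ((Finset.univ.filter (fun p : Fin (m+1) × Fin (m+1) =>
            π p.2 < π p.1 ∧ p.1 - t < p.2 - t)).card : ℤ) := by
      rw [← sum_Icc_cast (fun t : Fin (m+1) =>
        ((Finset.univ.filter (fun p : Fin (m+1) × Fin (m+1) =>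
          π p.2 < π p.1 ∧ p.1 - t < p.2 - t)).card : ℤ))]
      apply Finset.sum_congr rfl
      intro i _
      rw [inv_rot]
    rw [h2]
    have h3 : ∀ t : Fin (m+1), ((Finset.univ.filter (fun p : Fin (m+1) × Fin (m+1) =>
        π p.2 < π p.1 ∧ p.1 - t < p.2 - t)).card : ℤ)
        = ∑ p ∈ Finset.univ.filter (fun p : Fin (m+1) × Fin (m+1) => π p.2 < π p.1),
            (if p.1 - t < p.2 - t then (1:ℤ) else 0) := by
      intro t
      rw [← Finset.filter_filter, Finset.card_filter, Nat.cast_sum]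
      apply Finset.sum_congr rfl
      intro p _
      split <;> simp
    simp only [h3]
    rw [Finset.sum_comm]
    have h4 : ∀ p ∈ Finset.univ.filter
        (fun p : Fin (m+1) × Fin (m+1) => π p.2 < π p.1),
        (∑ t : Fin (m+1), if p.1 - t < p.2 - t then (1:ℤ) else 0)
          = (m+1 : ℤ) - (((p.2 - p.1).val : ℕ) : ℤ) := by
      intro p hp
      simp only [Finset.mem_filter] at hp
      have hab : p.1 ≠ p.2 := by
        intro h
        rw [h] at hp
        exact lt_irrefl _ hp.2
      exact count_rot p.1 p.2 hab
    rw [Finset.sum_congr rfl h4]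
    have hsplit := Finset.sum_filter_add_sum_filter_not
      (Finset.univ.filter (fun p : Fin (m+1) × Fin (m+1) => π p.2 < π p.1))
      (fun p => p.1 < p.2)
      (fun p : Fin (m+1) × Fin (m+1) => (m+1 : ℤ) - (((p.2 - p.1).val : ℕ) : ℤ))
    rw [Finset.filter_filter, Finset.filter_filter] at hsplit
    rw [← hsplit]
    -- first part
    have hset1 : (Finset.univ.filter
        (fun p : Fin (m+1) × Fin (m+1) => π p.2 < π p.1 ∧ p.1 < p.2))
        = Finset.univ.filter
        (fun p : Fin (m+1) × Fin (m+1) => p.1 < p.2 ∧ π p.2 < π p.1) := by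
      apply Finset.filter_congr
      intro p _
      exact and_comm
    have hS1 : ∑ p ∈ Finset.univ.filter
        (fun p : Fin (m+1) × Fin (m+1) => π p.2 < π p.1 ∧ p.1 < p.2),
        ((m+1 : ℤ) - (((p.2 - p.1).val : ℕ) : ℤ))
        = (m+1 : ℤ) * inversions π - winv π := by
      rw [hset1]
      have : ∀ p ∈ Finset.univ.filter
          (fun p : Fin (m+1) × Fin (m+1) => p.1 < p.2 ∧ π p.2 < π p.1),
          ((m+1 : ℤ) - (((p.2 - p.1).val : ℕ) : ℤ))
          = (m+1 : ℤ) - ((p.2 : ℤ) - (p.1 : ℤ)) := by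
        intro p hp
        simp only [Finset.mem_filter] at hp
        rw [sub_val_of_lt hp.2.1]
      rw [Finset.sum_congr rfl this, Finset.sum_sub_distrib, Finset.sum_const,
        nsmul_eq_mul, ← pinv_eq π]
      unfold inversions
      ring
    rw [hS1]
    -- second part
    have hS2 : ∑ p ∈ Finset.univ.filter
        (fun p : Fin (m+1) × Fin (m+1) => π p.2 < π p.1 ∧ ¬ p.1 < p.2),
        ((m+1 : ℤ) - (((p.2 - p.1).val : ℕ) : ℤ))
        = (((m+2).choose 3 : ℕ) : ℤ) - winv π := by
      have hgt : ∀ p ∈ Finset.univ.filter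
          (fun p : Fin (m+1) × Fin (m+1) => π p.2 < π p.1 ∧ ¬ p.1 < p.2),
          p.2 < p.1 := by
        intro p hp
        simp only [Finset.mem_filter] at hp
        have hne : p.1 ≠ p.2 := by
          intro h; rw [h] at hp; exact lt_irrefl _ hp.2.1
        rcases lt_or_ge p.2 p.1 with h | h
        · exact h
        · exact absurd (lt_of_le_of_ne h hne) hp.2.2
      have hterm : ∀ p ∈ Finset.univ.filter
          (fun p : Fin (m+1) × Fin (m+1) => π p.2 < π p.1 ∧ ¬ p.1 < p.2),
          ((m+1 : ℤ) - (((p.2 - p.1).val : ℕ) : ℤ)) = (p.1 : ℤ) - (p.2 : ℤ) := by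
        intro p hp
        rw [sub_val_of_gt (hgt p hp)]
        ring
      rw [Finset.sum_congr rfl hterm]
      have hswap : ∑ p ∈ Finset.univ.filter
          (fun p : Fin (m+1) × Fin (m+1) => π p.2 < π p.1 ∧ ¬ p.1 < p.2),
          ((p.1 : ℤ) - (p.2 : ℤ))
          = ∑ p ∈ Finset.univ.filter
          (fun p : Fin (m+1) × Fin (m+1) => p.1 < p.2 ∧ ¬ π p.2 < π p.1),
          ((p.2 : ℤ) - (p.1 : ℤ)) := by
        apply Finset.sum_nbij' (fun p => (p.2, p.1)) (fun p => (p.2, p.1))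
        · intro p hp
          have h1 := hgt p hp
          simp only [Finset.mem_filter, Finset.mem_univ, true_and] at hp ⊢
          exact ⟨h1, asymm hp.1⟩
        · intro p hp
          simp only [Finset.mem_filter, Finset.mem_univ, true_and] at hp ⊢
          have hne : π p.1 ≠ π p.2 := by
            intro h
            exact absurd (π.injective h) (ne_of_lt hp.1)
          refine ⟨lt_of_le_of_ne (le_of_not_gt hp.2) hne, not_lt.mpr (le_of_lt hp.1)⟩
        · intro p _; rfl
        · intro p _; rfl
        · intro p _; rfl
      rw [hswap]
      have hsplit2 := Finset.sum_filter_add_sum_filter_not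
        (Finset.univ.filter (fun p : Fin (m+1) × Fin (m+1) => p.1 < p.2))
        (fun p => π p.2 < π p.1)
        (fun p : Fin (m+1) × Fin (m+1) => ((p.2 : ℤ) - (p.1 : ℤ)))
      rw [Finset.filter_filter, Finset.filter_filter] at hsplit2
      have := pinv_eq π
      have hc := @Cval m
      linarith [hsplit2, this, hc]
    rw [hS2]
    unfold cwinv
    push_cast
    ring
  constructor
  · -- Part 1: existence of minimizing index
    have hne : (Finset.Icc 1 (m+1)).Nonempty := ⟨1, by simp⟩
    obtain ⟨i0, hi0, hmin⟩ := Finset.exists_min_image (Finset.Icc 1 (m+1))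
      (fun i => inversions (π * (finRotate (m+1)) ^ i)) hne
    refine ⟨i0 % (m+1), Nat.mod_lt _ (by omega), ?_⟩
    have hpow : (finRotate (m+1)) ^ (i0 % (m+1)) = (finRotate (m+1)) ^ i0 := by
      apply Equiv.ext
      intro q
      rw [rotPow, rotPow]
      congr 1
      apply Fin.ext
      rw [Fin.val_natCast, Fin.val_natCast]
      exact Nat.mod_eq_of_lt (Nat.mod_lt _ (by omega))
    rw [hpow]
    have hle : ∑ i ∈ Finset.Icc 1 (m+1), (inversions (π * (finRotate (m+1)) ^ i0) : ℤ)
        ≤ ∑ i ∈ Finset.Icc 1 (m+1), (inversions (π * (finRotate (m+1)) ^ i) : ℤ) := by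
      apply Finset.sum_le_sum
      intro i hi
      exact_mod_cast hmin i hi
    have hconst : ∑ i ∈ Finset.Icc 1 (m+1),
        (inversions (π * (finRotate (m+1)) ^ i0) : ℤ)
        = (m+1 : ℤ) * inversions (π * (finRotate (m+1)) ^ i0) := by
      rw [Finset.sum_const, Nat.card_Icc, nsmul_eq_mul]
      norm_num
    calc ((m+1 : ℕ) : ℤ) * inversions (π * (finRotate (m+1)) ^ i0)
        = ∑ i ∈ Finset.Icc 1 (m+1),
            (inversions (π * (finRotate (m+1)) ^ i0) : ℤ) := by rw [hconst]; push_cast; ring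
      _ ≤ _ := hle
  · simpa using hsum
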